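/- Let ρ(r) = r + √(1 + r²). For every A > 0 one has 2A · ρ(1/A)^{ρ(A)} ≥ 1, and for every A > 0 and every δ ≥ 1 it holds that ρ(A) · (2A · ρ(1/A)^{ρ(A)})^{−1/δ} ≥ e^{−2}; in particular, for fixed A > 0 this quantity is monotonically increasing in δ on [1,∞). -/
import Mathlib


/-- `ρ(r) = r + √(1 + r²)`. -/
noncomputable def rho (r : ℝ) : ℝ := r + Real.sqrt (1 + r ^ 2)

lemma log_le_half_sub_inv {t : ℝ} (ht : 1 ≤ t) : Real.log t ≤ (t - t⁻¹) / 2 := by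
  have h0 : (0:ℝ) < t := lt_of_lt_of_le one_pos ht
  have h1 : Real.log t ≤ Real.sinh (Real.log t) :=
    Real.self_le_sinh_iff.2 (Real.log_nonneg ht)
  rwa [Real.sinh_log h0] at h1

lemma rho_gt_one {A : ℝ} (hA : 0 < A) : 1 < rho A := by
  have hq : Real.sqrt (1 + A ^ 2) ^ 2 = 1 + A ^ 2 := Real.sq_sqrt (by positivity)
  have hq0 : 0 ≤ Real.sqrt (1 + A ^ 2) := Real.sqrt_nonneg _
  have h : (1:ℝ) ≤ Real.sqrt (1 + A ^ 2) := by nlinarith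
  unfold rho; linarith

lemma rho_sq {A : ℝ} (hA : 0 < A) : rho A ^ 2 = 2 * A * rho A + 1 := by
  have hq : Real.sqrt (1 + A ^ 2) ^ 2 = 1 + A ^ 2 :=
    Real.sq_sqrt (by positivity)
  unfold rho at *; nlinarith

lemma rho_inv_eq {A : ℝ} (hA : 0 < A) : rho (1 / A) = (rho A + 1) / (rho A - 1) := by
  have hq : Real.sqrt (1 + A ^ 2) ^ 2 = 1 + A ^ 2 := Real.sq_sqrt (by positivity)
  have hq0 : 0 ≤ Real.sqrt (1 + A ^ 2) := Real.sqrt_nonneg _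
  have hq1 : 1 ≤ Real.sqrt (1 + A ^ 2) := by nlinarith
  have hsqrt : Real.sqrt (1 + (1 / A) ^ 2) = Real.sqrt (1 + A ^ 2) / A := by
    rw [show 1 + (1 / A) ^ 2 = (Real.sqrt (1 + A ^ 2) / A) ^ 2 by
      field_simp; nlinarith]
    exact Real.sqrt_sq (by positivity)
  have hden : rho A - 1 > 0 := by have := rho_gt_one hA; linarith
  unfold rho at *
  rw [hsqrt]
  field_simp
  nlinarith

lemma two_A_rho_inv {A : ℝ} (hA : 0 < A) :
    2 * A * rho (1 / A) = (rho A + 1) ^ 2 / rho A := by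
  have hs1 : 1 < rho A := rho_gt_one hA
  have h2A : 2 * A * rho A = rho A ^ 2 - 1 := by have := rho_sq hA; nlinarith
  rw [rho_inv_eq hA]
  have h1 : rho A - 1 ≠ 0 := by linarith
  have h2 : rho A ≠ 0 := by linarith
  field_simp
  nlinarith

lemma key (A : ℝ) (hA : 0 < A) :
    2 * A * rho (1 / A) ^ rho A ≤ Real.exp 2 * rho A := by
  set s := rho A with hsdef
  have hs1 : 1 < s := rho_gt_one hA
  have hs0 : 0 < s := by linarith
  have hsne : s ≠ 0 := ne_of_gt hs0
  have hsm : (0:ℝ) < s - 1 := by linarith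
  have hsmne : s - 1 ≠ 0 := ne_of_gt hsm
  have hsp : (0:ℝ) < s + 1 := by linarith
  have hspne : s + 1 ≠ 0 := ne_of_gt hsp
  have h2A : 2 * A * s = s ^ 2 - 1 := by have := rho_sq hA; nlinarith
  have hXpos : (0:ℝ) < (s + 1) / (s - 1) := div_pos hsp hsm
  rw [rho_inv_eq hA]
  have hBpos : (0:ℝ) < 2 * A * ((s + 1) / (s - 1)) ^ s := by
    have : (0:ℝ) < ((s + 1) / (s - 1)) ^ s := Real.rpow_pos_of_pos hXpos s
    positivity
  have hlogX : Real.log (((s + 1) / (s - 1)) ^ s) = s * Real.log ((s + 1) / (s - 1)) :=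
    Real.log_rpow hXpos s
  have ha : Real.log ((s + 1) / s) ≤ ((s + 1) / s - s / (s + 1)) / 2 := by
    have h := log_le_half_sub_inv (t := (s + 1) / s)
      (by rw [le_div_iff₀ hs0]; linarith)
    rwa [inv_div] at h
  have hb : Real.log (s / (s - 1)) ≤ (s / (s - 1) - (s - 1) / s) / 2 := by
    have h := log_le_half_sub_inv (t := s / (s - 1))
      (by rw [le_div_iff₀ hsm]; linarith)
    rwa [inv_div] at h
  have hlogsum : Real.log (2 * A * ((s + 1) / (s - 1)) ^ s) ≤ 2 + Real.log s := by
    rw [Real.log_mul (by positivity) (by positivity), hlogX]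
    have h2Aeq : 2 * A = (s ^ 2 - 1) / s := by field_simp; linarith
    have hlog2A : Real.log (2 * A) = Real.log (s + 1) + Real.log (s - 1) - Real.log s := by
      rw [h2Aeq, Real.log_div (ne_of_gt (by nlinarith : (0:ℝ) < s ^ 2 - 1)) hsne,
        show s ^ 2 - 1 = (s + 1) * (s - 1) by ring,
        Real.log_mul hspne hsmne]
    have hlogXeq : Real.log ((s + 1) / (s - 1)) = Real.log (s + 1) - Real.log (s - 1) :=
      Real.log_div hspne hsmne
    have heq1 : Real.log (s + 1) = Real.log s + Real.log ((s + 1) / s) := by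
      rw [Real.log_div hspne hsne]; ring
    have heq2 : Real.log (s - 1) = Real.log s - Real.log (s / (s - 1)) := by
      rw [Real.log_div hsne hsmne]; ring
    rw [hlog2A, hlogXeq, heq1, heq2]
    have h1 : (s + 1) * Real.log ((s + 1) / s) ≤ (2 * s + 1) / (2 * s) := by
      calc (s + 1) * Real.log ((s + 1) / s) ≤ (s + 1) * (((s + 1) / s - s / (s + 1)) / 2) :=
            mul_le_mul_of_nonneg_left ha (by linarith)
        _ = (2 * s + 1) / (2 * s) := by field_simp; ring
    have h2 : (s - 1) * Real.log (s / (s - 1)) ≤ (2 * s - 1) / (2 * s) := by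
      calc (s - 1) * Real.log (s / (s - 1)) ≤ (s - 1) * ((s / (s - 1) - (s - 1) / s) / 2) :=
            mul_le_mul_of_nonneg_left hb (by linarith)
        _ = (2 * s - 1) / (2 * s) := by field_simp; ring
    have hsum : (2 * s + 1) / (2 * s) + (2 * s - 1) / (2 * s) = 2 := by
      field_simp; ring
    nlinarith [h1, h2]
  have h := Real.exp_le_exp.2 hlogsum
  rwa [Real.exp_log hBpos, Real.exp_add, Real.exp_log hs0] at h

/-- For every `A > 0` one has `2A·ρ(1/A)^{ρ(A)} ≥ 1`; for every `A > 0` and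
`δ ≥ 1` it holds that `ρ(A)·(2A·ρ(1/A)^{ρ(A)})^{-1/δ} ≥ e⁻²`; and for fixed
`A > 0` this quantity is monotonically increasing in `δ` on `[1,∞)`. -/
theorem stmt7 :
    (∀ A : ℝ, 0 < A → 1 ≤ 2 * A * rho (1 / A) ^ rho A) ∧
    (∀ A : ℝ, 0 < A → ∀ δ : ℝ, 1 ≤ δ →
      Real.exp (-2) ≤ rho A * (2 * A * rho (1 / A) ^ rho A) ^ (-(1 / δ))) ∧
    (∀ A : ℝ, 0 < A → ∀ δ₁ δ₂ : ℝ, 1 ≤ δ₁ → δ₁ ≤ δ₂ →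
      rho A * (2 * A * rho (1 / A) ^ rho A) ^ (-(1 / δ₁)) ≤
        rho A * (2 * A * rho (1 / A) ^ rho A) ^ (-(1 / δ₂))) := by
  have hB1 : ∀ A : ℝ, 0 < A → 1 ≤ 2 * A * rho (1 / A) ^ rho A := by
    intro A hA
    have hs1 : 1 < rho A := rho_gt_one hA
    have hX1 : (1:ℝ) ≤ rho (1 / A) := by
      rw [rho_inv_eq hA, le_div_iff₀ (by linarith)]; linarith
    have hXs : rho (1 / A) ≤ rho (1 / A) ^ rho A := by
      calc rho (1 / A) = rho (1 / A) ^ (1:ℝ) := (Real.rpow_one _).symm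
        _ ≤ rho (1 / A) ^ rho A :=
            Real.rpow_le_rpow_of_exponent_le hX1 (le_of_lt hs1)
    have h4 : 4 ≤ 2 * A * rho (1 / A) := by
      rw [two_A_rho_inv hA, le_div_iff₀ (by linarith)]
      nlinarith
    have := mul_le_mul_of_nonneg_left hXs (by linarith : (0:ℝ) ≤ 2 * A)
    nlinarith
  refine ⟨hB1, ?_, ?_⟩
  · intro A hA δ hδ
    have hs1 : 1 < rho A := rho_gt_one hA
    have hB := hB1 A hA
    have hBpos : (0:ℝ) < 2 * A * rho (1 / A) ^ rho A := by linarith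
    have hexp : -(1:ℝ) ≤ -(1 / δ) := by
      have : 1 / δ ≤ 1 := by
        rw [div_le_one (by linarith)]; exact hδ
      linarith
    have h1 : (2 * A * rho (1 / A) ^ rho A) ^ (-(1:ℝ)) ≤
        (2 * A * rho (1 / A) ^ rho A) ^ (-(1 / δ)) :=
      Real.rpow_le_rpow_of_exponent_le hB hexp
    have h2 : Real.exp (-2) ≤ rho A * (2 * A * rho (1 / A) ^ rho A) ^ (-(1:ℝ)) := by
      rw [Real.rpow_neg_one, ← div_eq_mul_inv, le_div_iff₀ hBpos]
      have hE : Real.exp (-2) * Real.exp 2 = 1 := by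
        rw [← Real.exp_add]; norm_num
      nlinarith [mul_le_mul_of_nonneg_left (key A hA) (Real.exp_pos (-2)).le]
    calc Real.exp (-2) ≤ rho A * (2 * A * rho (1 / A) ^ rho A) ^ (-(1:ℝ)) := h2
      _ ≤ rho A * (2 * A * rho (1 / A) ^ rho A) ^ (-(1 / δ)) :=
          mul_le_mul_of_nonneg_left h1 (by linarith)
  · intro A hA δ₁ δ₂ h1 h12
    have hB := hB1 A hA
    have hs1 : 1 < rho A := rho_gt_one hA
    have hexp : -(1 / δ₁) ≤ -(1 / δ₂) := by
      have : 1 / δ₂ ≤ 1 / δ₁ := one_div_le_one_div_of_le (by linarith) h12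
      linarith
    exact mul_le_mul_of_nonneg_left
      (Real.rpow_le_rpow_of_exponent_le hB hexp) (by linarith)
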